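/- Let d, r ≥ 2, k = d+1, and let s_1, …, s_{d+1} ∈ R^d be the vertices of a regular simplex inscribed in the unit sphere (unit vectors with ⟨s_i, s_j⟩ = −1/d for i ≠ j). Then for every nonzero w ∈ R^d and every θ ∈ (0, π/2), writing U for the linear span of {g(x) : x ∈ W_θ} and π_U for the orthogonal projection of R^d onto U, one has ‖π_U(w)‖ ≤ (8dr)^{3d²} ‖w‖ sin θ; that is, in this setting one may take η = (8dr)^{3d²}. -/

import Mathlib

attribute [local instance] Classical.propDecidable

open scoped RealInnerProductSpace

/-- The defining condition of the space `X` of swaps: `x ∈ ℤ^k` with all `|x i| ≤ 2r-2`,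
`∑ x i = 0` and `∑ |x i| ≤ 4r-4`. -/
def SwapCond (k r : ℕ) (x : Fin k → ℤ) : Prop :=
  (∀ i, |x i| ≤ 2 * (r : ℤ) - 2) ∧ (∑ i, x i = 0) ∧ (∑ i, |x i| ≤ 4 * (r : ℤ) - 4)

/-- `g x = ∑ i, x i • s i`. -/
noncomputable def gMap {k d : ℕ} (s : Fin k → EuclideanSpace ℝ (Fin d))
    (x : Fin k → ℤ) : EuclideanSpace ℝ (Fin d) :=
  ∑ i, (x i : ℝ) • s i

/-- The sine of the angle `θ(x)` between `g x` and the hyperplane `w^⊥`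
(`0` by convention when `g x = 0`, matching division-by-zero conventions). -/
noncomputable def sinAngle {k d : ℕ} (s : Fin k → EuclideanSpace ℝ (Fin d))
    (w : EuclideanSpace ℝ (Fin d)) (x : Fin k → ℤ) : ℝ :=
  |⟪gMap s x, w⟫| / (‖gMap s x‖ * ‖w‖)

/-- The constant `β₀ = L / min {‖g x‖ : x ∈ X, g x ≠ 0}`, with `L = 8(r-1)²`. -/
noncomputable def beta0 (k r : ℕ) {d : ℕ} (s : Fin k → EuclideanSpace ℝ (Fin d)) : ℝ :=
  8 * ((r : ℝ) - 1) ^ 2 /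
    sInf {t : ℝ | ∃ x, SwapCond k r x ∧ gMap s x ≠ 0 ∧ t = ‖gMap s x‖}


section Aux

open Matrix

lemma coeff_bound {E : Type*} [NormedAddCommGroup E] [InnerProductSpace ℝ E] {m : ℕ}
    (v : Fin m → E) (hind : LinearIndependent ℝ v)
    (t : ℝ) (ht : 1 ≤ t) (A : Matrix (Fin m) (Fin m) ℤ)
    (hA : ∀ i j, ⟪v i, v j⟫ = t * (A i j : ℝ))
    (R : ℝ) (hR : 1 ≤ R) (hv : ∀ i, ‖v i‖ ≤ R)
    (c : Fin m → ℝ) (u : E) (hu : ∑ i, c i • v i = u) (hu1 : ‖u‖ ≤ 1) :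
    ∀ j, |c j| ≤ (m.factorial : ℝ) * (R ^ 2) ^ m := by
  set N : Matrix (Fin m) (Fin m) ℝ := Matrix.of fun i j => ⟪v i, v j⟫ with hN
  have hmul : ∀ (c' : Fin m → ℝ) (j), (N *ᵥ c') j = ⟪v j, ∑ i, c' i • v i⟫ := by
    intro c' j
    simp [hN, Matrix.mulVec, dotProduct, inner_sum, real_inner_smul_right, mul_comm]
  have hquad : ∀ c' : Fin m → ℝ, c' ⬝ᵥ (N *ᵥ c') = ⟪∑ i, c' i • v i, ∑ i, c' i • v i⟫ := by
    intro c'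
    rw [sum_inner]
    simp [dotProduct, hmul, real_inner_smul_left]
  have hdet0 : N.det ≠ 0 := by
    intro h
    obtain ⟨c', hc', hker⟩ := (Matrix.exists_mulVec_eq_zero_iff).2 h
    have h0 : (⟪∑ i, c' i • v i, ∑ i, c' i • v i⟫ : ℝ) = 0 := by
      rw [← hquad, hker, dotProduct_zero]
    have : ∑ i, c' i • v i = 0 := by
      rwa [inner_self_eq_zero] at h0
    exact hc' (funext (Fintype.linearIndependent_iff.1 hind c' this))
  have hNA : N = t • (A.map (Int.cast : ℤ → ℝ)) := by
    ext i j
    simp [hN, hA, Matrix.map_apply]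
  have hdetN : N.det = t ^ m * ((A.det : ℤ) : ℝ) := by
    rw [hNA, Matrix.det_smul, Fintype.card_fin]
    congr 1
    simpa using (RingHom.map_det (Int.castRingHom ℝ) A).symm
  have hAdet : A.det ≠ 0 := by
    intro h
    rw [h] at hdetN
    simp at hdetN
    exact hdet0 hdetN
  have hdet1 : (1 : ℝ) ≤ |N.det| := by
    rw [hdetN, abs_mul, abs_pow, abs_of_pos (by linarith : (0:ℝ) < t)]
    have h1 : (1:ℝ) ≤ t ^ m := one_le_pow₀ ht
    have h2 : (1:ℝ) ≤ |((A.det : ℤ) : ℝ)| := by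
      rw [← Int.cast_abs]
      exact_mod_cast Int.one_le_abs hAdet
    nlinarith
  set q : Fin m → ℝ := fun j => ⟪v j, u⟫ with hqdef
  have hq : N *ᵥ c = q := by
    funext j
    rw [hmul, hu]
  have key : N.det • c = N.adjugate *ᵥ q := by
    rw [← hq, Matrix.mulVec_mulVec, Matrix.adjugate_mul, Matrix.smul_mulVec,
      Matrix.one_mulVec]
  intro j
  have hcj : c j * N.det = (N.updateCol j q).det := by
    have := congrFun key j
    rw [← Matrix.cramer_eq_adjugate_mulVec, Matrix.cramer_apply] at this
    simpa [mul_comm] using this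
  have hentry : ∀ i l, |(N.updateCol j q) i l| ≤ R ^ 2 := by
    intro i l
    rw [Matrix.updateCol_apply]
    split_ifs with h
    · calc |q i| ≤ ‖v i‖ * ‖u‖ := abs_real_inner_le_norm _ _
        _ ≤ R * 1 := mul_le_mul (hv i) hu1 (norm_nonneg _) (by linarith)
        _ ≤ R ^ 2 := by nlinarith
    · calc |N i l| ≤ ‖v i‖ * ‖v l‖ := abs_real_inner_le_norm _ _
        _ ≤ R * R := mul_le_mul (hv i) (hv l) (norm_nonneg _) (by linarith)
        _ = R ^ 2 := by ring
  have hdetb : |(N.updateCol j q).det| ≤ (m.factorial : ℝ) * (R ^ 2) ^ m := by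
    have := Matrix.det_le (A := N.updateCol j q) (abv := AbsoluteValue.abs) (x := R ^ 2)
      (fun i l => hentry i l)
    simpa [Fintype.card_fin, nsmul_eq_mul] using this
  calc |c j| = |c j| * 1 := by ring
    _ ≤ |c j| * |N.det| := by
        exact mul_le_mul_of_nonneg_left hdet1 (abs_nonneg _)
    _ = |(N.updateCol j q).det| := by rw [← abs_mul, hcj]
    _ ≤ (m.factorial : ℝ) * (R ^ 2) ^ m := hdetb
lemma gMap_inner {d : ℕ} (hd : 2 ≤ d) (s : Fin (d+1) → EuclideanSpace ℝ (Fin d))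
    (hs : ∀ i, ‖s i‖ = 1) (hs' : ∀ i j, i ≠ j → ⟪s i, s j⟫ = -1/d)
    (x y : Fin (d+1) → ℤ) (hx : ∑ i, x i = 0) :
    ⟪gMap s x, gMap s y⟫ = ((d:ℝ)+1)/d * ∑ i, (x i : ℝ) * (y i : ℝ) := by
  have hd0 : (d : ℝ) ≠ 0 := by positivity
  have h1 : ⟪gMap s x, gMap s y⟫ = ∑ i, ∑ j, (x i : ℝ) * (y j : ℝ) * ⟪s i, s j⟫ := by
    rw [gMap, gMap, sum_inner]
    refine Finset.sum_congr rfl fun i _ => ?_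
    rw [inner_sum]
    refine Finset.sum_congr rfl fun j _ => ?_
    rw [real_inner_smul_left, real_inner_smul_right]
    ring
  rw [h1]
  have h2 : ∀ i j, (x i : ℝ) * (y j : ℝ) * ⟪s i, s j⟫
      = (x i : ℝ) * (y j : ℝ) * (-1/d) + (if j = i then (1 + 1/(d:ℝ)) * (x i * y j) else 0) := by
    intro i j
    rcases eq_or_ne i j with h | h
    · subst h
      have hsi : ⟪s i, s i⟫ = 1 := by
        rw [real_inner_self_eq_norm_mul_norm, hs i]; norm_num
      rw [hsi, if_pos rfl]
      field_simp
      ring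
    · rw [hs' i j h, if_neg (Ne.symm h)]
      ring
  simp only [h2, Finset.sum_add_distrib, Finset.sum_ite_eq', Finset.mem_univ, if_true]
  have h4 : (∑ i, (x i : ℝ)) = 0 := by
    have := congrArg (Int.cast : ℤ → ℝ) hx
    push_cast at this
    simpa using this
  have h3 : ∑ i, ∑ j, (x i : ℝ) * (y j : ℝ) * (-1/(d:ℝ)) = 0 := by
    have he : ∑ i, ∑ j, (x i : ℝ) * (y j : ℝ) * (-1/(d:ℝ))
        = ∑ i, (x i : ℝ) * ((∑ j, (y j : ℝ)) * (-1/(d:ℝ))) := by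
      refine Finset.sum_congr rfl fun i _ => ?_
      rw [Finset.sum_mul, Finset.mul_sum]
      exact Finset.sum_congr rfl fun j _ => by ring
    rw [he, ← Finset.sum_mul, h4, zero_mul]
  rw [h3, zero_add, ← Finset.mul_sum]
  congr 1
  field_simp
lemma gMap_norm_le {d r : ℕ} (s : Fin (d+1) → EuclideanSpace ℝ (Fin d))
    (hs : ∀ i, ‖s i‖ = 1) (x : Fin (d+1) → ℤ) (hx : SwapCond (d+1) r x) :
    ‖gMap s x‖ ≤ 4 * (r : ℝ) := by
  calc ‖gMap s x‖ ≤ ∑ i, ‖(x i : ℝ) • s i‖ := norm_sum_le _ _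
    _ = ∑ i, |(x i : ℝ)| := by
        refine Finset.sum_congr rfl fun i _ => ?_
        rw [norm_smul, hs i, Real.norm_eq_abs, mul_one]
    _ = ((∑ i, |x i| : ℤ) : ℝ) := by push_cast; rfl
    _ ≤ ((4 * (r:ℤ) - 4 : ℤ) : ℝ) := by exact_mod_cast hx.2.2
    _ ≤ 4 * (r : ℝ) := by push_cast; linarith
lemma arith_bound (d r m : ℕ) (hd : 2 ≤ d) (hr : 2 ≤ r) (hm : m ≤ d) :
    (m : ℝ) * (m.factorial : ℝ) * ((4 * (r:ℝ)) ^ 2) ^ m * (4 * (r:ℝ)) ≤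
      (8 * (d : ℝ) * r) ^ (3 * d ^ 2) := by
  set P : ℝ := 8 * (d : ℝ) * r with hP
  have hd1 : (1:ℝ) ≤ (d:ℝ) := by exact_mod_cast hd.trans' (by norm_num)
  have hr1 : (1:ℝ) ≤ (r:ℝ) := by exact_mod_cast hr.trans' (by norm_num)
  have hP1 : (1:ℝ) ≤ P := by rw [hP]; nlinarith
  have h4r : (4 * (r:ℝ)) ≤ P := by rw [hP]; nlinarith
  have h4r0 : (0:ℝ) ≤ 4 * (r:ℝ) := by positivity
  have hmP : (m : ℝ) ≤ P := by
    have : (m:ℝ) ≤ (d:ℝ) := by exact_mod_cast hm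
    rw [hP]; nlinarith
  have hfact : ((m.factorial : ℕ) : ℝ) ≤ P ^ d := by
    have h1 : m.factorial ≤ d ^ d := by
      calc m.factorial ≤ m ^ m := Nat.factorial_le_pow m
        _ ≤ d ^ m := Nat.pow_le_pow_left hm m
        _ ≤ d ^ d := Nat.pow_le_pow_right (by omega) hm
    calc ((m.factorial : ℕ) : ℝ) ≤ ((d ^ d : ℕ) : ℝ) := by exact_mod_cast h1
      _ = (d:ℝ) ^ d := by push_cast; ring
      _ ≤ P ^ d := by
          apply pow_le_pow_left₀ (by linarith) _ d
          rw [hP]; nlinarith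
  have hpow : ((4 * (r:ℝ)) ^ 2) ^ m ≤ P ^ (2 * d) := by
    calc ((4 * (r:ℝ)) ^ 2) ^ m ≤ (P ^ 2) ^ m := by
          apply pow_le_pow_left₀ (by positivity) _ m
          exact pow_le_pow_left₀ h4r0 h4r 2
      _ = P ^ (2 * m) := by rw [← pow_mul]
      _ ≤ P ^ (2 * d) := pow_le_pow_right₀ hP1 (by omega)
  have hm0 : (0:ℝ) ≤ (m:ℝ) := by positivity
  have hf0 : (0:ℝ) ≤ ((m.factorial : ℕ) : ℝ) := by positivity
  calc (m : ℝ) * (m.factorial : ℝ) * ((4 * (r:ℝ)) ^ 2) ^ m * (4 * (r:ℝ))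
      ≤ P * P ^ d * P ^ (2 * d) * P := by
        apply mul_le_mul _ h4r h4r0 (by positivity)
        apply mul_le_mul _ hpow (by positivity) (by positivity)
        exact mul_le_mul hmP hfact hf0 (by linarith)
    _ = P ^ (1 + d + 2 * d + 1) := by ring
    _ ≤ P ^ (3 * d ^ 2) := pow_le_pow_right₀ hP1 (by nlinarith)

end Aux


theorem simplex_eta_explicit (d r : ℕ) (hd : 2 ≤ d) (hr : 2 ≤ r)
    (s : Fin (d + 1) → EuclideanSpace ℝ (Fin d))
    (hs : ∀ i, ‖s i‖ = 1)
    (hs' : ∀ i j, i ≠ j → ⟪s i, s j⟫ = -1 / d) :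
    ∀ w : EuclideanSpace ℝ (Fin d), w ≠ 0 →
      ∀ θ : ℝ, 0 < θ → θ < Real.pi / 2 →
        ‖(Submodule.orthogonalProjection
            (Submodule.span ℝ
              {v : EuclideanSpace ℝ (Fin d) |
                ∃ x, SwapCond (d + 1) r x ∧ sinAngle s w x < Real.sin θ ∧ v = gMap s x})
            w : EuclideanSpace ℝ (Fin d))‖ ≤
          (8 * (d : ℝ) * r) ^ (3 * d ^ 2) * ‖w‖ * Real.sin θ := by
  intro w hw θ hθ1 hθ2
  have hsin : 0 < Real.sin θ :=
    Real.sin_pos_of_pos_of_lt_pi hθ1 (hθ2.trans (half_lt_self Real.pi_pos))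
  set T : Set (EuclideanSpace ℝ (Fin d)) :=
    {v | ∃ x, SwapCond (d + 1) r x ∧ sinAngle s w x < Real.sin θ ∧ v = gMap s x} with hT
  set U : Submodule ℝ (EuclideanSpace ℝ (Fin d)) := Submodule.span ℝ T with hU
  set p : EuclideanSpace ℝ (Fin d) := (Submodule.orthogonalProjection U w : EuclideanSpace ℝ (Fin d))
    with hpdef
  have hRHS0 : 0 ≤ (8 * (d : ℝ) * r) ^ (3 * d ^ 2) * ‖w‖ * Real.sin θ := by positivity
  by_cases hp : p = 0
  · rw [hp, norm_zero]; exact hRHS0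
  -- independent spanning family
  obtain ⟨b, hbT, hbspan, hbind⟩ := exists_linearIndependent ℝ T
  have hbfin : b.Finite := hbind.set_finite_of_isNoetherian
  haveI := hbfin.fintype
  set m := Fintype.card b with hm
  let e : b ≃ Fin m := Fintype.equivFin b
  set v : Fin m → EuclideanSpace ℝ (Fin d) := fun j => ((e.symm j : b) : EuclideanSpace ℝ (Fin d))
    with hv
  have hvind : LinearIndependent ℝ v := hbind.comp e.symm e.symm.injective
  have hvrange : Set.range v = b := by
    rw [show v = (Subtype.val : b → EuclideanSpace ℝ (Fin d)) ∘ e.symm from rfl, Set.range_comp,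
      Equiv.range_eq_univ, Set.image_univ, Subtype.range_coe]
  have hvT : ∀ j, ∃ x, SwapCond (d+1) r x ∧ sinAngle s w x < Real.sin θ ∧ v j = gMap s x :=
    fun j => hbT (e.symm j).2
  set_option synthInstance.maxHeartbeats 1000000 in
  choose X hX1 hX2 hX3 using hvT
  have hmd : m ≤ d := by
    have := hvind.fintype_card_le_finrank
    simpa [finrank_euclideanSpace_fin] using this
  -- norms
  have hvnorm : ∀ j, ‖v j‖ ≤ 4 * (r : ℝ) := fun j => by
    rw [hX3 j]; exact gMap_norm_le s hs (X j) (hX1 j)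
  have hvne : ∀ j, v j ≠ 0 := fun j => hvind.ne_zero j
  have h4r1 : (1:ℝ) ≤ 4 * (r : ℝ) := by
    have : (1:ℝ) ≤ (r:ℝ) := by exact_mod_cast hr.trans' (by norm_num)
    linarith
  -- inner product bounds with w
  have hinner_w : ∀ j, |⟪v j, w⟫| ≤ (4 * (r:ℝ)) * ‖w‖ * Real.sin θ := by
    intro j
    have hgx : gMap s (X j) ≠ 0 := by rw [← hX3 j]; exact hvne j
    have hpos : 0 < ‖gMap s (X j)‖ * ‖w‖ := by
      apply mul_pos (norm_pos_iff.2 hgx) (norm_pos_iff.2 hw)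
    have := hX2 j
    rw [sinAngle, div_lt_iff₀ hpos] at this
    have h1 : |⟪v j, w⟫| ≤ Real.sin θ * (‖v j‖ * ‖w‖) := by
      rw [hX3 j]; exact this.le
    calc |⟪v j, w⟫| ≤ Real.sin θ * (‖v j‖ * ‖w‖) := h1
      _ ≤ Real.sin θ * ((4 * (r:ℝ)) * ‖w‖) := by
          apply mul_le_mul_of_nonneg_left _ hsin.le
          exact mul_le_mul_of_nonneg_right (hvnorm j) (norm_nonneg _)
      _ = (4 * (r:ℝ)) * ‖w‖ * Real.sin θ := by ring
  -- Gram matrix structure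
  set A : Matrix (Fin m) (Fin m) ℤ := Matrix.of fun i j => ∑ l, X i l * X j l with hA
  have ht1 : (1:ℝ) ≤ ((d:ℝ)+1)/d := by
    have hd0 : (0:ℝ) < d := by exact_mod_cast hd.trans_lt' (by norm_num)
    rw [le_div_iff₀ hd0]; linarith
  have hAinner : ∀ i j, ⟪v i, v j⟫ = ((d:ℝ)+1)/d * (A i j : ℝ) := by
    intro i j
    rw [hX3 i, hX3 j, gMap_inner hd s hs hs' (X i) (X j) (hX1 i).2.1]
    congr 1
    have hAij : A i j = ∑ l, X i l * X j l := rfl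
    rw [hAij]
    push_cast
    rfl
  -- the unit vector u
  have hpU : p ∈ U := SetLike.coe_mem _
  have hpn : 0 < ‖p‖ := norm_pos_iff.2 hp
  set u : EuclideanSpace ℝ (Fin d) := ‖p‖⁻¹ • p with hu
  have huU : u ∈ U := U.smul_mem _ hpU
  have hunorm : ‖u‖ = 1 := norm_smul_inv_norm hp
  have huspan : u ∈ Submodule.span ℝ (Set.range v) := by
    rw [hvrange, hbspan]; exact huU
  obtain ⟨c, hc⟩ := (Submodule.mem_span_range_iff_exists_fun ℝ).1 huspan
  have hcb := coeff_bound v hvind _ ht1 A hAinner (4*(r:ℝ)) h4r1 hvnorm c u hc hunorm.le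
  have horth : ⟪w - p, p⟫ = 0 := U.starProjection_inner_eq_zero w p hpU
  have hpw : ⟪p, w⟫ = ‖p‖^2 := by
    have h1 : ⟪w, p⟫ - ⟪p, p⟫ = 0 := by rw [← inner_sub_left]; exact horth
    rw [real_inner_self_eq_norm_sq] at h1
    rw [real_inner_comm]
    linarith
  have hup : ⟪u, w⟫ = ‖p‖ := by
    rw [hu, real_inner_smul_left, hpw]
    field_simp
  have hsum : ⟪u, w⟫ = ∑ j, c j * ⟪v j, w⟫ := by
    rw [← hc, sum_inner]
    exact Finset.sum_congr rfl fun j _ => real_inner_smul_left _ _ _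
  have hbound : ‖p‖ ≤
      (m:ℝ) * (m.factorial : ℝ) * ((4*(r:ℝ))^2)^m * (4*(r:ℝ)) * (‖w‖ * Real.sin θ) := by
    rw [← hup, hsum]
    calc ∑ j, c j * ⟪v j, w⟫ ≤ ∑ j, |c j * ⟪v j, w⟫| :=
          Finset.sum_le_sum fun j _ => le_abs_self _
      _ = ∑ j, |c j| * |⟪v j, w⟫| := by
          exact Finset.sum_congr rfl fun j _ => abs_mul _ _
      _ ≤ ∑ _j : Fin m, ((m.factorial : ℝ) * ((4*(r:ℝ))^2)^m) * ((4*(r:ℝ)) * ‖w‖ * Real.sin θ) := by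
          refine Finset.sum_le_sum fun j _ => ?_
          exact mul_le_mul (hcb j) (hinner_w j) (abs_nonneg _) (by positivity)
      _ = (m:ℝ) * (((m.factorial : ℝ) * ((4*(r:ℝ))^2)^m) * ((4*(r:ℝ)) * ‖w‖ * Real.sin θ)) := by
          rw [Finset.sum_const, Finset.card_univ, Fintype.card_fin, nsmul_eq_mul]
      _ = (m:ℝ) * (m.factorial : ℝ) * ((4*(r:ℝ))^2)^m * (4*(r:ℝ)) * (‖w‖ * Real.sin θ) := by
          ring
  have harith := arith_bound d r m hd hr hmd
  calc ‖p‖ ≤ (m:ℝ) * (m.factorial : ℝ) * ((4*(r:ℝ))^2)^m * (4*(r:ℝ)) * (‖w‖ * Real.sin θ) :=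
        hbound
    _ ≤ (8 * (d : ℝ) * r) ^ (3 * d ^ 2) * (‖w‖ * Real.sin θ) :=
        mul_le_mul_of_nonneg_right harith (by positivity)
    _ = (8 * (d : ℝ) * r) ^ (3 * d ^ 2) * ‖w‖ * Real.sin θ := by ring
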